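/- Let n and m both be even. Then H²(D_{2n}, Z/mZ) with trivial coefficients is isomorphic to Z/2Z × Z/2Z × Z/2Z. -/

import Mathlib

set_option linter.unusedSectionVars false
namespace S10
open DihedralGroup

variable {n m : ℕ}

/-- cocycle identity for trivial coefficients -/
def IsC (f : DihedralGroup n × DihedralGroup n → ZMod m) : Prop :=
  ∀ g h k, f (g*h, k) + f (g,h) = f (h,k) + f (g,h*k)

def FF (f : DihedralGroup n × DihedralGroup n → ZMod m) (k : ℕ) : ZMod m :=
  ∑ j ∈ Finset.range k, f (r (j : ZMod n), r 1)

def al (f : DihedralGroup n × DihedralGroup n → ZMod m) : ZMod m := FF f n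

def be (f : DihedralGroup n × DihedralGroup n → ZMod m) : ZMod m :=
  f (sr 0, sr 0) + f (1, 1)

def ga (f : DihedralGroup n × DihedralGroup n → ZMod m) : ZMod m :=
  f (sr 0, r 1) + f (sr 0, r 1) + f (sr 1, sr 1) + f (1, 1)

def de (f : DihedralGroup n × DihedralGroup n → ZMod m) : ZMod m :=
  al f - ((n/2 : ℕ) : ZMod m) * (ga f - be f)

lemma vcast [NeZero n] (i : ZMod n) : ((i.val : ℕ) : ZMod n) = i := by
  simp [ZMod.natCast_val, ZMod.cast_id]

lemma FF_succ (f : DihedralGroup n × DihedralGroup n → ZMod m) (k : ℕ) :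
    FF f (k+1) = FF f k + f (r (k : ZMod n), r 1) := Finset.sum_range_succ _ _

section basic
variable {f : DihedralGroup n × DihedralGroup n → ZMod m} (hf : IsC f)
include hf

lemma one_fst (g : DihedralGroup n) : f (1, g) = f (1,1) := by
  have h := hf 1 1 g
  rw [one_mul, one_mul] at h
  exact (add_left_cancel h).symm

lemma one_snd (g : DihedralGroup n) : f (g, 1) = f (1,1) := by
  have h := hf g 1 1
  rw [mul_one, mul_one] at h
  have h2 := one_fst hf 1
  exact add_right_cancel (a := f (g,1)) (by linear_combination h)

end basic

section normalized
variable [NeZero n] {f : DihedralGroup n × DihedralGroup n → ZMod m}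
  (hf : IsC f) (hone : f (1,1) = 0)

include hf hone

lemma f1g (g : DihedralGroup n) : f (1, g) = 0 := by rw [one_fst hf, hone]
lemma fg1 (g : DihedralGroup n) : f (g, 1) = 0 := by rw [one_snd hf, hone]

/-- products of rotations via partial sums -/
lemma key1 : ∀ b a : ℕ, f (r (a : ZMod n), r (b : ZMod n)) = FF f (a+b) - FF f a - FF f b := by
  intro b
  induction b with
  | zero =>
    intro a
    simp only [Nat.cast_zero, Nat.add_zero]
    rw [← one_def, fg1 hf hone]
    simp [FF]
  | succ b ih =>
    intro a
    have h := hf (r (a : ZMod n)) (r (b : ZMod n)) (r 1)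
    rw [r_mul_r, r_mul_r] at h
    have e1 : ((a : ZMod n) + (b : ZMod n)) = ((a + b : ℕ) : ZMod n) := by push_cast; ring
    have e2 : ((b : ZMod n) + 1) = ((b + 1 : ℕ) : ZMod n) := by push_cast; ring
    rw [e1, e2] at h
    have hb := ih a
    rw [show a + (b+1) = (a+b)+1 by ring, FF_succ f (a+b), FF_succ f b]
    linear_combination hb - h

lemma key2 : ∀ k : ℕ, FF f (k + n) = FF f k + al f := by
  intro k
  induction k with
  | zero => simp [al, FF]
  | succ k ih =>
    have e3 : ((k + n : ℕ) : ZMod n) = ((k : ℕ) : ZMod n) := by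
      push_cast [ZMod.natCast_self]; ring
    rw [show k + 1 + n = (k + n) + 1 by ring, FF_succ, ih, e3, FF_succ]
    ring

end normalized

/-- the vanishing lemma: a cocycle vanishing on `(·, r j)` and on the two
basic reflection squares vanishes identically -/
lemma lemK [NeZero n] (θ : DihedralGroup n → DihedralGroup n → ZMod m)
    (hθ : ∀ g h k, θ (g*h) k + θ g h = θ h k + θ g (h*k))
    (hr : ∀ g (j : ZMod n), θ g (r j) = 0)
    (h00 : θ (sr 0) (sr 0) = 0) (h11 : θ (sr 1) (sr 1) = 0) :
    ∀ g h, θ g h = 0 := by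
  have h1g : ∀ h, θ 1 h = 0 := by
    intro h
    have H := hθ 1 1 h
    rw [one_mul, one_mul] at H
    have h11' : θ 1 1 = 0 := by rw [one_def]; exact hr _ 0
    linear_combination h11' - H
  have S1 : ∀ g (i : ZMod n), θ g (sr i) = θ g (sr 0) := by
    intro g i
    have H := hθ g (sr i) (r (-i))
    rw [sr_mul_r, add_neg_cancel] at H
    rw [hr (g * sr i) (-i), hr (sr i) (-i)] at H
    linear_combination H
  have S2 : ∀ g (i : ZMod n), θ (g * r i) (sr 0) = θ (r i) (sr 0) + θ g (sr 0) := by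
    intro g i
    have H := hθ g (r i) (sr 0)
    rw [r_mul_sr, zero_sub] at H
    rw [hr g i, S1 g (-i)] at H
    linear_combination H
  have u0 : θ (r 1) (sr 0) = 0 := by
    have A := S1 (sr 1) 1
    rw [h11] at A
    have B := S2 (sr 0) 1
    rw [show (sr 0 * r 1 : DihedralGroup n) = sr 1 by rw [sr_mul_r, zero_add], h00] at B
    linear_combination -A - B
  have S4 : ∀ k : ℕ, θ (r (k : ZMod n)) (sr 0) = 0 := by
    intro k
    induction k with
    | zero => rw [Nat.cast_zero, ← one_def]; exact h1g _
    | succ k ih =>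
      have := S2 (r (k : ZMod n)) 1
      rw [r_mul_r, u0, ih] at this
      rw [show ((k+1 : ℕ) : ZMod n) = (k : ZMod n) + 1 by push_cast; ring]
      linear_combination this
  have S5 : ∀ i : ZMod n, θ (r i) (sr 0) = 0 := fun i => by
    have := S4 i.val; rwa [vcast] at this
  have S6 : ∀ i : ZMod n, θ (sr i) (sr 0) = 0 := by
    intro i
    have := S2 (sr 0) i
    rw [show (sr 0 * r i : DihedralGroup n) = sr i by rw [sr_mul_r, zero_add], S5, h00] at this
    linear_combination this
  intro g h
  match h with
  | DihedralGroup.r j => exact hr g j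
  | DihedralGroup.sr j =>
    rw [S1 g j]
    match g with
    | DihedralGroup.r i => exact S5 i
    | DihedralGroup.sr i => exact S6 i

theorem kernel_cob [NeZero n] (hn2 : 2 ∣ n) (hn1 : 1 < n)
    {f : DihedralGroup n × DihedralGroup n → ZMod m}
    (hf : IsC f) (hone : f (1,1) = 0)
    (b c : ZMod m) (hb : be f = b + b) (hc : ga f = c + c) (hd : de f = 0) :
    ∃ φ : DihedralGroup n → ZMod m, ∀ g h, f (g, h) = φ h - φ (g*h) + φ g := by
  haveI : Fact (1 < n) := ⟨hn1⟩
  set x := c - b with hx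
  have hnm : ((n/2 : ℕ) : ZMod m) * 2 = (n : ZMod m) := by
    have h2 : n/2*2 = n := Nat.div_mul_cancel hn2
    calc ((n/2 : ℕ) : ZMod m) * 2 = ((n/2*2 : ℕ) : ZMod m) := by push_cast; ring
      _ = (n : ZMod m) := by rw [h2]
  have hax : al f = (n : ZMod m) * x := by
    have hd' := hd
    unfold de at hd'
    rw [hb, hc] at hd'
    linear_combination hd' + (c - b) * hnm
  unfold be at hb; rw [hone, add_zero] at hb
  unfold ga at hc; rw [hone, add_zero] at hc
  set ψ : DihedralGroup n → ZMod m := fun g =>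
    match g with
    | DihedralGroup.r i => FF f i.val - (i.val : ZMod m) * x
    | DihedralGroup.sr i => -b + (FF f i.val - (i.val : ZMod m) * x) + f (sr 0, r i)
    with hψ
  have ψr : ∀ i : ZMod n, ψ (r i) = FF f i.val - (i.val : ZMod m) * x := fun i => rfl
  have ψsr : ∀ i : ZMod n, ψ (sr i) = -b + (FF f i.val - (i.val : ZMod m) * x) + f (sr 0, r i) :=
    fun i => rfl
  have FF0 : FF f 0 = 0 := by simp [FF]
  have FF1 : FF f 1 = 0 := by
    rw [show (1:ℕ) = 0 + 1 from rfl, FF_succ]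
    simp only [FF, Finset.sum_range_zero, Nat.cast_zero, zero_add, ← one_def]
    rw [f1g hf hone]
  -- the r-r case
  have hrr : ∀ i j : ZMod n, f (r i, r j) + ψ (r i) + ψ (r j) - ψ (r i * r j) = 0 := by
    intro i j
    have e1 : f (r i, r j) = FF f (i.val + j.val) - FF f i.val - FF f j.val := by
      have := key1 hf hone j.val i.val; rwa [vcast, vcast] at this
    rw [r_mul_r, ψr, ψr, ψr]
    have hval : (i+j).val = (i.val + j.val) % n := ZMod.val_add i j
    rcases lt_or_ge (i.val + j.val) n with hlt | hge
    · have hv : (i+j).val = i.val + j.val := by rw [hval, Nat.mod_eq_of_lt hlt]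
      rw [e1, hv]; push_cast; ring
    · have hilt := ZMod.val_lt i
      have hjlt := ZMod.val_lt j
      have hv : i.val + j.val = (i+j).val + n := by
        have h2 : (i.val + j.val) % n = i.val + j.val - n := by
          rw [Nat.mod_eq_sub_mod hge, Nat.mod_eq_of_lt (by omega)]
        omega
      have e2 : FF f (i.val + j.val) = FF f ((i+j).val) + al f := by
        rw [hv, key2 hf hone]
      have e3 : ((i.val + j.val : ℕ) : ZMod m) = (((i+j).val : ℕ) : ZMod m) + (n : ZMod m) := by
        rw [hv]; push_cast; ring
      push_cast at e3
      rw [e1, e2]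
      push_cast
      linear_combination hax - x * e3
  -- the sr-r case
  have ψsr' : ∀ i : ZMod n, ψ (sr i) = -b + ψ (r i) + f (sr 0, r i) := fun i => by
    rw [ψsr, ψr]
  have hsrr : ∀ i j : ZMod n, f (sr i, r j) + ψ (sr i) + ψ (r j) - ψ (sr i * r j) = 0 := by
    intro i j
    have A := hrr i j
    rw [r_mul_r] at A
    have H := hf (sr 0) (r i) (r j)
    rw [sr_mul_r, zero_add, r_mul_r] at H
    rw [sr_mul_r, ψsr' i, ψsr' (i+j)]
    linear_combination A + H
  have hr : ∀ (g : DihedralGroup n) (j : ZMod n),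
      f (g, r j) + ψ g + ψ (r j) - ψ (g * r j) = 0 := by
    intro g j
    match g with
    | DihedralGroup.r i => exact hrr i j
    | DihedralGroup.sr i => exact hsrr i j
  have h00 : f (sr 0, sr 0) + ψ (sr 0) + ψ (sr 0) - ψ (sr 0 * sr 0) = 0 := by
    rw [sr_mul_sr, sub_self, ψsr, ψr]
    simp only [ZMod.val_zero, Nat.cast_zero, FF, Finset.sum_range_zero, ← one_def]
    rw [fg1 hf hone]
    linear_combination hb
  have h11 : f (sr 1, sr 1) + ψ (sr 1) + ψ (sr 1) - ψ (sr 1 * sr 1) = 0 := by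
    rw [sr_mul_sr, sub_self, ψsr, ψr]
    simp only [ZMod.val_zero, Nat.cast_zero, ZMod.val_one, Nat.cast_one, FF1, FF0]
    linear_combination hc
  have hθc : ∀ g h k : DihedralGroup n,
      (f (g*h, k) + ψ (g*h) + ψ k - ψ (g*h*k)) + (f (g,h) + ψ g + ψ h - ψ (g*h))
      = (f (h,k) + ψ h + ψ k - ψ (h*k)) + (f (g,h*k) + ψ g + ψ (h*k) - ψ (g*(h*k))) := by
    intro g h k
    rw [← mul_assoc]
    linear_combination hf g h k
  have hall := lemK (fun g h => f (g,h) + ψ g + ψ h - ψ (g*h)) hθc hr h00 h11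
  refine ⟨fun g => -ψ g, ?_⟩
  intro g h
  have := hall g h
  linear_combination this

structure Ext (n m : ℕ) where
  a : ZMod m
  g : DihedralGroup n

def extMul (f : DihedralGroup n × DihedralGroup n → ZMod m) :
    Ext n m → Ext n m → Ext n m := fun x y => ⟨x.a + y.a + f (x.g, y.g), x.g * y.g⟩

def extMonoid (f : DihedralGroup n × DihedralGroup n → ZMod m)
    (hf : IsC f) (hone : f (1,1) = 0) : Monoid (Ext n m) where
  mul := extMul f
  one := ⟨0, 1⟩
  mul_assoc x y z := by
    show extMul f (extMul f x y) z = extMul f x (extMul f y z)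
    unfold extMul
    simp only [Ext.mk.injEq]
    constructor
    · linear_combination hf x.g y.g z.g
    · rw [mul_assoc]
  one_mul x := by
    show extMul f ⟨0,1⟩ x = x
    unfold extMul
    rw [one_fst hf, hone, one_mul]
    simp
  mul_one x := by
    show extMul f x ⟨0,1⟩ = x
    unfold extMul
    rw [one_snd hf, hone, mul_one]
    simp

theorem two_al [NeZero n] {f : DihedralGroup n × DihedralGroup n → ZMod m}
    (hf : IsC f) (hone : f (1,1) = 0) :
    al f + al f = (n : ZMod m) * (ga f - be f) := by
  letI : Monoid (Ext n m) := extMonoid f hf hone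
  have mul_def : ∀ x y : Ext n m, x * y = ⟨x.a + y.a + f (x.g, y.g), x.g * y.g⟩ :=
    fun x y => rfl
  have one_def' : (1 : Ext n m) = ⟨0, 1⟩ := rfl
  set R : Ext n m := ⟨0, r 1⟩ with hR
  set S : Ext n m := ⟨0, sr 0⟩ with hS
  set bb : Ext n m := ⟨f (sr 0, sr 0), 1⟩ with hbb
  set cc : Ext n m := ⟨f (sr 0, r 1) + f (sr 0, r 1) + f (sr 1, sr 1), 1⟩ with hcc
  have hcent : ∀ (w x : Ext n m), w.g = 1 → w * x = x * w := by
    rintro ⟨wa, wg⟩ x hw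
    simp only at hw
    subst hw
    rw [mul_def, mul_def]
    congr 1
    · rw [one_fst hf x.g, one_snd hf x.g, hone]; ring
    · rw [one_mul, mul_one]
  have bmove : ∀ (w x y : Ext n m), w.g = 1 → w * (x * y) = x * (w * y) := by
    intro w x y hw
    rw [hcent w (x*y) hw, mul_assoc, ← hcent w y hw]
  have hbg : bb.g = 1 := rfl
  have hcg : cc.g = 1 := rfl
  have Rpow : ∀ k : ℕ, R^k = ⟨FF f k, r (k : ZMod n)⟩ := by
    intro k
    induction k with
    | zero =>
      rw [pow_zero, one_def']
      simp only [Ext.mk.injEq]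
      exact ⟨by simp [FF], by rw [Nat.cast_zero, one_def]⟩
    | succ k ih =>
      rw [pow_succ, ih, mul_def]
      simp only [Ext.mk.injEq]
      constructor
      · rw [FF_succ]; ring
      · rw [r_mul_r]; congr 1; push_cast; ring
  have cpow : ∀ (z : ZMod m) (k : ℕ), (⟨z,1⟩ : Ext n m)^k = ⟨(k : ZMod m) * z, 1⟩ := by
    intro z k
    induction k with
    | zero => rw [pow_zero, one_def']; simp
    | succ k ih =>
      rw [pow_succ, ih, mul_def]
      simp only [Ext.mk.injEq]
      constructor
      · rw [one_fst hf, hone]; push_cast; ring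
      · rw [one_mul]
  have hSR : S * R = ⟨f (sr 0, r 1), sr 1⟩ := by
    rw [mul_def]
    simp only [Ext.mk.injEq]
    exact ⟨by ring, by rw [sr_mul_r, zero_add]⟩
  have hRSR : R * (S * R) = ⟨f (sr 0, r 1) + f (r 1, sr 1), sr 0⟩ := by
    rw [hSR, mul_def]
    simp only [Ext.mk.injEq]
    exact ⟨by ring, by rw [r_mul_sr, sub_self]⟩
  have C0 : bb * (R * (S * R)) = cc * S := by
    rw [hRSR, mul_def, mul_def, hbb, hcc]
    have E0 := hf (sr 0) (sr 0) (sr 1)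
    rw [sr_mul_sr, sub_self, ← one_def, one_fst hf, hone, sr_mul_sr, sub_zero] at E0
    have E1 := hf (r 1) (sr 1) (sr 1)
    rw [r_mul_sr, sub_self, sr_mul_sr, sub_self, ← one_def, one_snd hf (r 1), hone] at E1
    congr 1
    linear_combination E0 + E1
  have MAIN : ∀ k : ℕ, bb^k * ((S*R^k) * (S*R^k)) = cc^k * (S*S) := by
    intro k
    induction k with
    | zero => simp
    | succ k ih =>
      have hcomm : R^k*R = R*R^k := by rw [← pow_succ, ← pow_succ']
      have claim1 : bb * ((S*(R^k*R)) * (S*(R^k*R))) = cc * ((S*R^k)*(S*R^k)) := by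
        have e4 : (S*(R^k*R)) * (S*(R^k*R)) = (S*R^k)*((R*(S*R))*R^k) := by
          simp only [mul_assoc]
          rw [hcomm]
        rw [e4, bmove bb _ _ hbg, ← mul_assoc bb, C0, mul_assoc cc S (R^k),
          ← bmove cc _ _ hcg]
      calc bb^(k+1) * ((S*R^(k+1)) * (S*R^(k+1)))
          = bb^k * (bb * ((S*(R^k*R)) * (S*(R^k*R)))) := by
            rw [pow_succ bb, pow_succ R, mul_assoc]
        _ = bb^k * (cc * ((S*R^k)*(S*R^k))) := by rw [claim1]
        _ = cc * (bb^k * ((S*R^k)*(S*R^k))) := by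
            rw [← mul_assoc, ← hcent cc _ hcg, mul_assoc]
        _ = cc^(k+1) * (S*S) := by rw [ih, ← mul_assoc, ← pow_succ']
  have hMn := MAIN n
  have hRn : R^n = ⟨al f, r 0⟩ := by
    rw [Rpow n, ZMod.natCast_self]; rfl
  have hSRn : S * R^n = ⟨al f, sr 0⟩ := by
    rw [hRn, mul_def]
    congr 1
    · rw [← one_def, one_snd hf (sr 0), hone]; ring
    · rw [sr_mul_r, zero_add]
  have htn : (S*R^n) * (S*R^n) = ⟨al f + al f + f (sr 0, sr 0), r 0⟩ := by
    rw [hSRn, mul_def]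
    congr 1
    rw [sr_mul_sr, sub_self]
  have hSS : S*S = ⟨f (sr 0, sr 0), r 0⟩ := by
    rw [mul_def]
    congr 1
    · show (0 : ZMod m) + 0 + f (sr 0, sr 0) = f (sr 0, sr 0); ring
    · rw [sr_mul_sr, sub_self]
  rw [htn, hSS, hbb, hcc, cpow, cpow, mul_def, mul_def] at hMn
  have hMa := congrArg Ext.a hMn
  simp only at hMa
  rw [← one_def, one_fst hf, hone] at hMa
  unfold ga be
  rw [hone]
  linear_combination hMa

def nrm (f : DihedralGroup n × DihedralGroup n → ZMod m) :
    DihedralGroup n × DihedralGroup n → ZMod m := fun p => f p - f (1,1)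

lemma IsC_nrm {f : DihedralGroup n × DihedralGroup n → ZMod m} (hf : IsC f) : IsC (nrm f) := by
  intro g h k
  simp only [nrm]
  linear_combination hf g h k

lemma nrm_one (f : DihedralGroup n × DihedralGroup n → ZMod m) : nrm f (1,1) = 0 := by
  simp [nrm]

lemma hnm_lemma (hn2 : 2 ∣ n) : ((n/2 : ℕ) : ZMod m) * 2 = (n : ZMod m) := by
  have h2 : n/2*2 = n := Nat.div_mul_cancel hn2
  calc ((n/2 : ℕ) : ZMod m) * 2 = ((n/2*2 : ℕ) : ZMod m) := by push_cast; ring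
    _ = (n : ZMod m) := by rw [h2]

lemma FF_nrm (f : DihedralGroup n × DihedralGroup n → ZMod m) (k : ℕ) :
    FF (nrm f) k = FF f k - (k : ZMod m) * f (1,1) := by
  induction k with
  | zero => simp [FF]
  | succ k ih =>
    rw [FF_succ, FF_succ, ih]
    simp only [nrm]
    push_cast
    ring

lemma be_nrm (f : DihedralGroup n × DihedralGroup n → ZMod m) :
    be (nrm f) = be f - (f (1,1) + f (1,1)) := by
  simp only [be, nrm]; ring

lemma ga_nrm (f : DihedralGroup n × DihedralGroup n → ZMod m) :
    ga (nrm f) = ga f - (4 : ZMod m) * f (1,1) := by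
  simp only [ga, nrm]; ring

lemma de_nrm (hn2 : 2 ∣ n) (f : DihedralGroup n × DihedralGroup n → ZMod m) :
    de (nrm f) = de f := by
  simp only [de, al, FF_nrm, be_nrm, ga_nrm]
  have := hnm_lemma (m := m) hn2
  linear_combination f (1,1) * this

theorem two_de [NeZero n] (hn2 : 2 ∣ n)
    {f : DihedralGroup n × DihedralGroup n → ZMod m} (hf : IsC f) :
    de f + de f = 0 := by
  have h2 := two_al (IsC_nrm hf) (nrm_one f)
  have h3 : de (nrm f) = de f := de_nrm hn2 f
  have hnm := hnm_lemma (m := m) hn2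
  unfold de at h3 ⊢
  linear_combination h2 - 2 * h3 - (ga (nrm f) - be (nrm f)) * hnm

/-- coboundary of a 1-cochain -/
def db (φ : DihedralGroup n → ZMod m) : DihedralGroup n × DihedralGroup n → ZMod m :=
  fun p => φ p.2 - φ (p.1 * p.2) + φ p.1

lemma IsC_db (φ : DihedralGroup n → ZMod m) : IsC (db φ) := by
  intro g h k
  simp only [db]
  rw [mul_assoc]
  ring

lemma be_db (φ : DihedralGroup n → ZMod m) : be (db φ) = φ (sr 0) + φ (sr 0) := by
  simp only [be, db]
  rw [sr_mul_sr, sub_self, ← one_def, one_mul]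
  ring

lemma ga_db (φ : DihedralGroup n → ZMod m) :
    ga (db φ) = (φ (r 1) + φ (sr 0)) + (φ (r 1) + φ (sr 0)) := by
  simp only [ga, db]
  rw [sr_mul_r, zero_add, sr_mul_sr, sub_self, ← one_def, one_mul]
  ring

lemma al_db [NeZero n] (φ : DihedralGroup n → ZMod m) :
    al (db φ) = (n : ZMod m) * φ (r 1) := by
  have key : ∀ k : ℕ, FF (db φ) k = (k : ZMod m) * φ (r 1) + φ (r 0) - φ (r (k : ZMod n)) := by
    intro k
    induction k with
    | zero => simp [FF]
    | succ k ih =>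
      rw [FF_succ, ih]
      simp only [db]
      rw [r_mul_r]
      have : ((k:ZMod n) + 1) = ((k+1 : ℕ) : ZMod n) := by push_cast; ring
      rw [this]
      push_cast
      ring
  unfold al
  rw [key n, ZMod.natCast_self]
  ring

lemma de_db [NeZero n] (hn2 : 2 ∣ n) (φ : DihedralGroup n → ZMod m) : de (db φ) = 0 := by
  unfold de
  rw [al_db, be_db, ga_db]
  have hnm := hnm_lemma (m := m) hn2
  linear_combination (-(φ (r 1))) * hnm

lemma FF_add (f g : DihedralGroup n × DihedralGroup n → ZMod m) (k : ℕ) :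
    FF (f + g) k = FF f k + FF g k := by
  simp [FF, Finset.sum_add_distrib]

lemma al_add (f g : DihedralGroup n × DihedralGroup n → ZMod m) :
    al (f + g) = al f + al g := FF_add f g n

lemma be_add (f g : DihedralGroup n × DihedralGroup n → ZMod m) :
    be (f + g) = be f + be g := by simp only [be, Pi.add_apply]; ring

lemma ga_add (f g : DihedralGroup n × DihedralGroup n → ZMod m) :
    ga (f + g) = ga f + ga g := by simp only [ga, Pi.add_apply]; ring

lemma de_add (f g : DihedralGroup n × DihedralGroup n → ZMod m) :
    de (f + g) = de f + de g := by
  simp only [de, al_add, be_add, ga_add]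
  ring

/-! ### generator 1 -/

def e1f : DihedralGroup n → ZMod m
  | DihedralGroup.r _ => 0
  | DihedralGroup.sr _ => 1

def gen1 : DihedralGroup n × DihedralGroup n → ZMod m := fun p => e1f p.1 * e1f p.2

lemma e1f_r (i : ZMod n) : (e1f (r i) : ZMod m) = 0 := rfl
lemma e1f_sr (i : ZMod n) : (e1f (sr i) : ZMod m) = 1 := rfl

lemma IsC_gen1 : IsC (gen1 (n := n) (m := m)) := by
  intro g h k
  rcases g with i | i <;> rcases h with j | j <;> rcases k with l | l <;>
    simp [gen1, e1f_r, e1f_sr]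

lemma be_gen1 : be (gen1 (n := n) (m := m)) = 1 := by
  simp [be, gen1, one_def, e1f_r, e1f_sr, -r_zero]

lemma ga_gen1 : ga (gen1 (n := n) (m := m)) = 1 := by
  simp [ga, gen1, one_def, e1f_r, e1f_sr, -r_zero]

lemma al_gen1 : al (gen1 (n := n) (m := m)) = 0 := by
  simp [al, FF, gen1, e1f_r]

lemma de_gen1 : de (gen1 (n := n) (m := m)) = 0 := by
  unfold de
  rw [al_gen1, be_gen1, ga_gen1]
  ring

/-! ### generator 2 -/

def pf : ZMod n → ZMod m := fun i => if i.val % 2 = 1 then 1 else 0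

def e2f : DihedralGroup n → ZMod m
  | DihedralGroup.r i => pf i
  | DihedralGroup.sr i => pf i

def gen2 : DihedralGroup n × DihedralGroup n → ZMod m := fun p => e2f p.1 * e2f p.2

lemma e2f_r (i : ZMod n) : (e2f (r i) : ZMod m) = pf i := rfl
lemma e2f_sr (i : ZMod n) : (e2f (sr i) : ZMod m) = pf i := rfl

section gen2
variable [NeZero n] (hn2 : 2 ∣ n)
include hn2

lemma pf_add (i j : ZMod n) :
    (pf (i + j) : ZMod m) = pf i + pf j - 2 * pf i * pf j := by
  unfold pf
  have h := Nat.mod_mod_of_dvd (i.val + j.val) hn2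
  rw [ZMod.val_add, h]
  rcases Nat.mod_two_eq_zero_or_one i.val with hi | hi <;>
    rcases Nat.mod_two_eq_zero_or_one j.val with hj | hj
  · have hs : (i.val + j.val) % 2 = 0 := by omega
    simp [hi, hj, hs]
  · have hs : (i.val + j.val) % 2 = 1 := by omega
    simp [hi, hj, hs]
  · have hs : (i.val + j.val) % 2 = 1 := by omega
    simp [hi, hj, hs]
  · have hs : (i.val + j.val) % 2 = 0 := by omega
    simp [hi, hj, hs]
    ring

lemma pf_sub (i j : ZMod n) :
    (pf (j - i) : ZMod m) = pf i + pf j - 2 * pf i * pf j := by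
  have h1 : ((j - i) + i).val = ((j-i).val + i.val) % n := ZMod.val_add _ _
  rw [sub_add_cancel] at h1
  have h2 := Nat.mod_mod_of_dvd ((j-i).val + i.val) hn2
  have h3 : (j - i).val % 2 = (j.val + i.val) % 2 := by omega
  unfold pf
  rw [h3]
  rcases Nat.mod_two_eq_zero_or_one i.val with hi | hi <;>
    rcases Nat.mod_two_eq_zero_or_one j.val with hj | hj
  · have hs : (j.val + i.val) % 2 = 0 := by omega
    simp [hi, hj, hs]
  · have hs : (j.val + i.val) % 2 = 1 := by omega
    simp [hi, hj, hs]
  · have hs : (j.val + i.val) % 2 = 1 := by omega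
    simp [hi, hj, hs]
  · have hs : (j.val + i.val) % 2 = 0 := by omega
    simp [hi, hj, hs]
    ring

lemma IsC_gen2 : IsC (gen2 (n := n) (m := m)) := by
  intro g h k
  rcases g with i | i <;> rcases h with j | j <;> rcases k with l | l <;>
    simp only [gen2, r_mul_r, r_mul_sr, sr_mul_r, sr_mul_sr, e2f_r, e2f_sr,
      pf_add hn2, pf_sub hn2] <;> ring

end gen2

lemma pf_zero : (pf (0 : ZMod n) : ZMod m) = 0 := by
  simp [pf, ZMod.val_zero]

lemma pf_one [NeZero n] (hn1 : 1 < n) : (pf (1 : ZMod n) : ZMod m) = 1 := by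
  haveI : Fact (1 < n) := ⟨hn1⟩
  simp [pf, ZMod.val_one]

lemma be_gen2 : be (gen2 (n := n) (m := m)) = 0 := by
  simp [be, gen2, one_def, e2f_r, e2f_sr, pf_zero, -r_zero]

lemma ga_gen2 [NeZero n] (hn1 : 1 < n) : ga (gen2 (n := n) (m := m)) = 1 := by
  simp [ga, gen2, one_def, e2f_r, e2f_sr, pf_zero, pf_one hn1, -r_zero]

lemma sum_mod_two (k : ℕ) : ∑ j ∈ Finset.range k, (j % 2) = k / 2 := by
  induction k with
  | zero => simp
  | succ k ih =>
    rw [Finset.sum_range_succ, ih]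
    omega

lemma al_gen2 [NeZero n] (hn2 : 2 ∣ n) (hn1 : 1 < n) :
    al (gen2 (n := n) (m := m)) = ((n / 2 : ℕ) : ZMod m) := by
  unfold al FF
  have hterm : ∀ j ∈ Finset.range n, (gen2 (r (j : ZMod n), r 1) : ZMod m)
      = ((j % 2 : ℕ) : ZMod m) := by
    intro j _
    have hv : ((j : ZMod n)).val % 2 = j % 2 := by
      rw [ZMod.val_natCast]
      exact Nat.mod_mod_of_dvd j hn2
    have hpf : (pf ((j : ZMod n)) : ZMod m) = ((j % 2 : ℕ) : ZMod m) := by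
      unfold pf
      rw [hv]
      rcases Nat.mod_two_eq_zero_or_one j with h | h <;> simp [h]
    simp only [gen2, e2f_r, pf_one hn1, mul_one, hpf]
  rw [Finset.sum_congr rfl hterm, ← Nat.cast_sum]
  congr 1
  exact sum_mod_two n

lemma de_gen2 [NeZero n] (hn2 : 2 ∣ n) (hn1 : 1 < n) :
    de (gen2 (n := n) (m := m)) = 0 := by
  unfold de
  rw [al_gen2 hn2 hn1, be_gen2, ga_gen2 hn1]
  ring

/-! ### generator 3 : the double cover carry cocycle -/

lemma val_add_disj [NeZero n] (i j : ZMod n) :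
    i.val + j.val = (i+j).val ∨ i.val + j.val = (i+j).val + n := by
  have hval := ZMod.val_add i j
  have hi := ZMod.val_lt i
  have hj := ZMod.val_lt j
  rcases lt_or_ge (i.val + j.val) n with hlt | hge
  · left; rw [hval, Nat.mod_eq_of_lt hlt]
  · right
    have h2 : (i.val + j.val) % n = i.val + j.val - n := by
      rw [Nat.mod_eq_sub_mod hge, Nat.mod_eq_of_lt (by omega)]
    omega

lemma val_sub_disj [NeZero n] (i j : ZMod n) :
    (j - i).val + i.val = j.val ∨ (j - i).val + i.val = j.val + n := by
  have h := val_add_disj (j - i) i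
  rw [sub_add_cancel] at h
  rcases h with h | h
  · left; omega
  · right; omega

def κf : DihedralGroup n → DihedralGroup (2*n)
  | DihedralGroup.r i => r ((i.val : ℕ) : ZMod (2*n))
  | DihedralGroup.sr i => sr ((i.val : ℕ) : ZMod (2*n))

lemma κf_r (i : ZMod n) : κf (r i) = r ((i.val : ℕ) : ZMod (2*n)) := rfl
lemma κf_sr (i : ZMod n) : κf (sr i) = sr ((i.val : ℕ) : ZMod (2*n)) := rfl

lemma r_inv' {k : ℕ} (v : ZMod k) : (r v)⁻¹ = r (-v) := rfl
lemma sr_inv' {k : ℕ} (v : ZMod k) : (sr v)⁻¹ = sr v := rfl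

def cf (g h : DihedralGroup n) : DihedralGroup (2*n) := κf g * κf h * (κf (g*h))⁻¹

def ιf : DihedralGroup (2*n) → ZMod m :=
  fun x => if x = r ((n : ℕ) : ZMod (2*n)) then ((m/2 : ℕ) : ZMod m) else 0

def gen3 : DihedralGroup n × DihedralGroup n → ZMod m := fun p => ιf (cf p.1 p.2)

section gen3
variable [NeZero n]

lemma h2n : ((n : ℕ) : ZMod (2*n)) + ((n : ℕ) : ZMod (2*n)) = 0 := by
  rw [← Nat.cast_add, show n + n = 2*n by ring, ZMod.natCast_self]

lemma hrn_ne : ((n : ℕ) : ZMod (2*n)) ≠ 0 := by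
  haveI : NeZero (2*n) := ⟨by have := NeZero.ne n; omega⟩
  intro h
  rw [ZMod.natCast_eq_zero_iff] at h
  have hn0 : 0 < n := Nat.pos_of_ne_zero (NeZero.ne n)
  have := Nat.le_of_dvd hn0 h
  omega

lemma rn_comm (x : DihedralGroup (2*n)) :
    r ((n : ℕ) : ZMod (2*n)) * x = x * r ((n : ℕ) : ZMod (2*n)) := by
  rcases x with j | j
  · rw [r_mul_r, r_mul_r, add_comm]
  · rw [r_mul_sr, sr_mul_r]
    congr 1
    linear_combination -(h2n (n := n))

lemma cf_mem (g h : DihedralGroup n) :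
    cf g h = 1 ∨ cf g h = r ((n : ℕ) : ZMod (2*n)) := by
  rcases g with i | i <;> rcases h with j | j
  · rw [cf, r_mul_r, κf_r, κf_r, κf_r, r_inv', r_mul_r, r_mul_r]
    rcases val_add_disj i j with hv | hv
    · left
      rw [one_def]
      congr 1
      have hc : ((i.val : ℕ) : ZMod (2*n)) + ((j.val : ℕ) : ZMod (2*n))
          = (((i+j).val : ℕ) : ZMod (2*n)) := by rw [← Nat.cast_add, hv]
      linear_combination hc
    · right
      congr 1
      have hc : ((i.val : ℕ) : ZMod (2*n)) + ((j.val : ℕ) : ZMod (2*n))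
          = (((i+j).val : ℕ) : ZMod (2*n)) + ((n:ℕ) : ZMod (2*n)) := by
        rw [← Nat.cast_add, ← Nat.cast_add, hv]
      linear_combination hc
  · rw [cf, r_mul_sr, κf_r, κf_sr, κf_sr, sr_inv', r_mul_sr, sr_mul_sr]
    rcases val_sub_disj i j with hv | hv
    · left
      rw [one_def]
      congr 1
      have hc : (((j - i).val : ℕ) : ZMod (2*n)) + ((i.val : ℕ) : ZMod (2*n))
          = ((j.val : ℕ) : ZMod (2*n)) := by rw [← Nat.cast_add, hv]
      linear_combination hc
    · right
      congr 1
      have hc : (((j - i).val : ℕ) : ZMod (2*n)) + ((i.val : ℕ) : ZMod (2*n))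
          = ((j.val : ℕ) : ZMod (2*n)) + ((n:ℕ) : ZMod (2*n)) := by
        rw [← Nat.cast_add, ← Nat.cast_add, hv]
      linear_combination hc
  · rw [cf, sr_mul_r, κf_sr, κf_r, κf_sr, sr_inv', sr_mul_r, sr_mul_sr]
    rcases val_add_disj i j with hv | hv
    · left
      rw [one_def]
      congr 1
      have hc : ((i.val : ℕ) : ZMod (2*n)) + ((j.val : ℕ) : ZMod (2*n))
          = (((i+j).val : ℕ) : ZMod (2*n)) := by rw [← Nat.cast_add, hv]
      linear_combination -hc
    · right
      congr 1
      have hc : ((i.val : ℕ) : ZMod (2*n)) + ((j.val : ℕ) : ZMod (2*n))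
          = (((i+j).val : ℕ) : ZMod (2*n)) + ((n:ℕ) : ZMod (2*n)) := by
        rw [← Nat.cast_add, ← Nat.cast_add, hv]
      linear_combination -hc - h2n (n := n)
  · rw [cf, sr_mul_sr, κf_sr, κf_sr, κf_r, r_inv', sr_mul_sr, r_mul_r]
    rcases val_sub_disj i j with hv | hv
    · left
      rw [one_def]
      congr 1
      have hc : (((j - i).val : ℕ) : ZMod (2*n)) + ((i.val : ℕ) : ZMod (2*n))
          = ((j.val : ℕ) : ZMod (2*n)) := by rw [← Nat.cast_add, hv]
      linear_combination -hc
    · right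
      congr 1
      have hc : (((j - i).val : ℕ) : ZMod (2*n)) + ((i.val : ℕ) : ZMod (2*n))
          = ((j.val : ℕ) : ZMod (2*n)) + ((n:ℕ) : ZMod (2*n)) := by
        rw [← Nat.cast_add, ← Nat.cast_add, hv]
      linear_combination -hc - h2n (n := n)

lemma ι_one : ιf (1 : DihedralGroup (2*n)) = (0 : ZMod m) := by
  rw [ιf, one_def, if_neg]
  intro h
  exact hrn_ne (n := n) (by injection h with h'; exact h'.symm)

lemma ι_rn : ιf (r ((n : ℕ) : ZMod (2*n))) = ((m/2 : ℕ) : ZMod m) := if_pos rfl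

lemma ι_mul (hm2 : 2 ∣ m) {z w : DihedralGroup (2*n)}
    (hz : z = 1 ∨ z = r ((n : ℕ) : ZMod (2*n)))
    (hw : w = 1 ∨ w = r ((n : ℕ) : ZMod (2*n))) :
    (ιf (z * w) : ZMod m) = ιf z + ιf w := by
  rcases hz with hz | hz <;> rcases hw with hw | hw <;> subst hz <;> subst hw
  · rw [one_mul, ι_one]; ring
  · rw [one_mul, ι_one]; ring
  · rw [mul_one, ι_one]; ring
  · rw [r_mul_r, h2n, ← one_def, ι_one, ι_rn]
    rw [← Nat.cast_add, show m/2 + m/2 = m from by omega, ZMod.natCast_self]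

lemma cf_coc (g h k : DihedralGroup n) :
    cf g h * cf (g*h) k = cf h k * cf g (h*k) := by
  have hL : cf g h * cf (g*h) k = κf g * (κf h * (κf k * (κf (g*h*k))⁻¹)) := by
    unfold cf
    simp only [mul_assoc, inv_mul_cancel_left]
  rcases cf_mem h k with hc | hc
  · have hk' : κf h * κf k = κf (h*k) := by
      have := hc
      unfold cf at this
      exact mul_inv_eq_one.1 this
    rw [hL, hc, one_mul]
    unfold cf
    rw [← hk', mul_assoc g h k]
    simp only [mul_assoc]
  · have hk' : κf h * κf k = r ((n : ℕ) : ZMod (2*n)) * κf (h*k) := by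
      have := hc
      unfold cf at this
      exact mul_inv_eq_iff_eq_mul.1 this
    rw [hL, hc]
    unfold cf
    rw [← mul_assoc (κf h), hk', mul_assoc g h k]
    have hmv : ∀ a b : DihedralGroup (2*n),
        a * (r ((n : ℕ) : ZMod (2*n)) * b) = r ((n : ℕ) : ZMod (2*n)) * (a * b) := by
      intro a b
      rw [← mul_assoc, ← rn_comm, mul_assoc]
    rw [show (r ((n:ℕ) : ZMod (2*n)) * κf (h*k)) * (κf (g*(h*k)))⁻¹
        = r ((n:ℕ) : ZMod (2*n)) * (κf (h*k) * (κf (g*(h*k)))⁻¹) from by rw [mul_assoc]]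
    rw [hmv]
    simp only [mul_assoc]

lemma IsC_gen3 (hm2 : 2 ∣ m) : IsC (gen3 (n := n) (m := m)) := by
  intro g h k
  show ιf (cf (g*h) k) + ιf (cf g h) = ιf (cf h k) + ιf (cf g (h*k))
  rw [add_comm (ιf (cf (g*h) k)) (ιf (cf g h)),
    ← ι_mul hm2 (cf_mem g h) (cf_mem (g*h) k), cf_coc,
    ι_mul hm2 (cf_mem h k) (cf_mem g (h*k))]
end gen3

section gen3vals
variable [NeZero n]

lemma gen3_11 : (gen3 ((1 : DihedralGroup n), 1) : ZMod m) = 0 := by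
  show ιf (cf (1 : DihedralGroup n) 1) = 0
  have h : cf (1 : DihedralGroup n) 1 = 1 := by
    rw [show (1 : DihedralGroup n) = r 0 from one_def]
    rw [cf, r_mul_r, add_zero]
    simp only [κf_r, ZMod.val_zero, Nat.cast_zero, r_inv', neg_zero, r_mul_r]
    rw [one_def]
    congr 1
    ring
  rw [h, ι_one]

lemma gen3_s0s0 : (gen3 ((sr 0 : DihedralGroup n), sr 0) : ZMod m) = 0 := by
  show ιf (cf (sr 0 : DihedralGroup n) (sr 0)) = 0
  have h : cf (sr 0 : DihedralGroup n) (sr 0) = 1 := by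
    rw [cf, sr_mul_sr, sub_self]
    simp only [κf_sr, κf_r, ZMod.val_zero, Nat.cast_zero, r_inv', neg_zero, sr_mul_sr, r_mul_r]
    rw [one_def]
    congr 1
    ring
  rw [h, ι_one]

lemma gen3_s0r1 (hn1 : 1 < n) : (gen3 ((sr 0 : DihedralGroup n), r 1) : ZMod m) = 0 := by
  haveI : Fact (1 < n) := ⟨hn1⟩
  show ιf (cf (sr 0 : DihedralGroup n) (r 1)) = 0
  have h : cf (sr 0 : DihedralGroup n) (r 1) = 1 := by
    rw [cf, sr_mul_r, zero_add]
    simp only [κf_sr, κf_r, ZMod.val_zero, ZMod.val_one, Nat.cast_zero, Nat.cast_one,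
      sr_inv', sr_mul_r, sr_mul_sr]
    rw [one_def]
    congr 1
    ring
  rw [h, ι_one]

lemma gen3_s1s1 (hn1 : 1 < n) : (gen3 ((sr 1 : DihedralGroup n), sr 1) : ZMod m) = 0 := by
  haveI : Fact (1 < n) := ⟨hn1⟩
  show ιf (cf (sr 1 : DihedralGroup n) (sr 1)) = 0
  have h : cf (sr 1 : DihedralGroup n) (sr 1) = 1 := by
    rw [cf, sr_mul_sr, sub_self]
    simp only [κf_sr, κf_r, ZMod.val_zero, ZMod.val_one, Nat.cast_zero, Nat.cast_one,
      r_inv', neg_zero, sr_mul_sr, r_mul_r]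
    rw [one_def]
    congr 1
    ring
  rw [h, ι_one]

lemma be_gen3 : be (gen3 (n := n) (m := m)) = 0 := by
  unfold be
  rw [gen3_s0s0, gen3_11]
  ring

lemma ga_gen3 (hn1 : 1 < n) : ga (gen3 (n := n) (m := m)) = 0 := by
  unfold ga
  rw [gen3_s0r1 hn1, gen3_s1s1 hn1, gen3_11]
  ring

lemma al_gen3 (hn1 : 1 < n) : al (gen3 (n := n) (m := m)) = ((m/2 : ℕ) : ZMod m) := by
  haveI : Fact (1 < n) := ⟨hn1⟩
  unfold al FF
  rw [Finset.sum_eq_single (n-1)]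
  · -- main term
    show ιf (cf (r ((n-1 : ℕ) : ZMod n)) (r 1)) = _
    have hival : (((n-1 : ℕ) : ZMod n)).val = n - 1 := ZMod.val_natCast_of_lt (by omega)
    have hsum : ((n-1 : ℕ) : ZMod n) + 1 = 0 := by
      have h' : ((n-1 : ℕ) : ZMod n) + ((1:ℕ) : ZMod n) = ((n : ℕ) : ZMod n) := by
        rw [← Nat.cast_add]
        congr 1
        omega
      rw [Nat.cast_one] at h'
      simpa [ZMod.natCast_self] using h'
    have h : cf (r ((n-1 : ℕ) : ZMod n)) (r 1) = r ((n : ℕ) : ZMod (2*n)) := by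
      rw [cf, r_mul_r, hsum, κf_r, κf_r, κf_r, r_inv', r_mul_r, r_mul_r,
        ZMod.val_zero, Nat.cast_zero, ZMod.val_one, hival]
      congr 1
      rw [show ((n : ℕ) : ZMod (2*n)) = ((n - 1 + 1 : ℕ) : ZMod (2*n)) from by congr 1; omega]
      push_cast
      ring
    rw [h, ι_rn]
  · -- other terms
    intro j hj hne
    have hjlt := Finset.mem_range.1 hj
    have hjlt' : j + 1 < n := by omega
    show ιf (cf (r ((j : ℕ) : ZMod n)) (r 1)) = 0
    have hival : (((j : ℕ) : ZMod n)).val = j := ZMod.val_natCast_of_lt (by omega)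
    have hsum : ((j : ℕ) : ZMod n) + 1 = ((j + 1 : ℕ) : ZMod n) := by push_cast; ring
    have hival2 : (((j+1 : ℕ) : ZMod n)).val = j + 1 := ZMod.val_natCast_of_lt hjlt'
    have h : cf (r ((j : ℕ) : ZMod n)) (r 1) = 1 := by
      rw [cf, r_mul_r, hsum, κf_r, κf_r, κf_r, r_inv', r_mul_r, r_mul_r,
        ZMod.val_one, hival, hival2]
      rw [one_def]
      congr 1
      push_cast
      ring
    rw [h, ι_one]
  · intro habs
    exact absurd (Finset.mem_range.2 (by omega)) habs

lemma de_gen3 (hn1 : 1 < n) : de (gen3 (n := n) (m := m)) = ((m/2 : ℕ) : ZMod m) := by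
  unfold de
  rw [al_gen3 hn1, be_gen3, ga_gen3 hn1]
  ring

end gen3vals

/-! ### ZMod helpers -/

lemma even_split [NeZero m] (hm2 : 2 ∣ m) (x : ZMod m)
    (hx : (ZMod.castHom hm2 (ZMod 2)) x = 0) : ∃ y : ZMod m, x = y + y := by
  rw [ZMod.castHom_apply, ZMod.cast_eq_val] at hx
  rw [ZMod.natCast_eq_zero_iff] at hx
  obtain ⟨t, ht⟩ := hx
  refine ⟨(t : ZMod m), ?_⟩
  have : ((x.val : ℕ) : ZMod m) = ((t + t : ℕ) : ZMod m) := by congr 1; omega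
  rw [vcast] at this
  rw [this]
  push_cast
  ring

lemma order2 [NeZero m] (hm2 : 2 ∣ m) (x : ZMod m) (hx : x + x = 0) :
    x = 0 ∨ x = ((m/2 : ℕ) : ZMod m) := by
  have hc : ((x.val + x.val : ℕ) : ZMod m) = 0 := by
    push_cast
    rw [vcast]
    exact hx
  rw [ZMod.natCast_eq_zero_iff] at hc
  obtain ⟨t, ht⟩ := hc
  have hlt := ZMod.val_lt x
  have hm0 : 0 < m := Nat.pos_of_ne_zero (NeZero.ne m)
  have ht2 : t < 2 := by
    by_contra hge
    push_neg at hge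
    have := Nat.mul_le_mul_left m hge
    omega
  have : x.val = 0 ∨ x.val = m / 2 := by interval_cases t <;> omega
  rcases this with h | h
  · left
    rw [← vcast x, h, Nat.cast_zero]
  · right
    rw [← vcast x, h]

lemma mhalf_ne [NeZero m] (hm2 : 2 ∣ m) : ((m/2 : ℕ) : ZMod m) ≠ 0 := by
  intro h
  rw [ZMod.natCast_eq_zero_iff] at h
  have hm0 : 0 < m := Nat.pos_of_ne_zero (NeZero.ne m)
  have h2 : 0 < m / 2 := by omega
  have := Nat.le_of_dvd h2 h
  omega

def addHomLE {M N : Type*} [AddCommGroup M] [AddCommGroup N] {im : Module ℤ M}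
    {inn : Module ℤ N} (e : M →+ N) :
    @LinearMap ℤ ℤ _ _ (RingHom.id ℤ) M N _ _ im inn where
  toFun := e
  map_add' := map_add e
  map_smul' z x := by
    simp only [RingHom.id_apply]
    have h1 := Int.cast_smul_eq_zsmul ℤ z x
    have h2 := Int.cast_smul_eq_zsmul ℤ z (e x)
    rw [Int.cast_id] at h1 h2
    rw [h1, map_zsmul, ← h2]

def addEquivLE {M N : Type*} [AddCommGroup M] [AddCommGroup N] {im : Module ℤ M}
    {inn : Module ℤ N} (e : M ≃+ N) :
    @LinearEquiv ℤ ℤ _ _ (RingHom.id ℤ) (RingHom.id ℤ) _ _ M N _ _ im inn where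
  toFun := e
  invFun := e.symm
  left_inv := e.left_inv
  right_inv := e.right_inv
  map_add' := map_add e
  map_smul' z x := by
    simp only [RingHom.id_apply]
    have h1 := Int.cast_smul_eq_zsmul ℤ z x
    have h2 := Int.cast_smul_eq_zsmul ℤ z (e x)
    rw [Int.cast_id] at h1 h2
    rw [h1, map_zsmul, ← h2]

end S10

open S10 DihedralGroup groupCohomology in
/-- For `n, m` both even, `H²(D_{2n}, ℤ/mℤ) ≅ ℤ/2ℤ × ℤ/2ℤ × ℤ/2ℤ` (trivial
coefficients). -/
theorem stmt10 (n m : ℕ) (hn4 : 4 ≤ n) (hn : Even n) (hm1 : 1 ≤ m) (hm : Even m) :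
    Nonempty ((groupCohomology (Rep.trivial ℤ (DihedralGroup n) (ZMod m)) 2)
      ≃ₗ[ℤ] (ZMod 2 × ZMod 2 × ZMod 2)) := by
  haveI : NeZero n := ⟨by omega⟩
  haveI : NeZero m := ⟨by omega⟩
  have hn2 : 2 ∣ n := even_iff_two_dvd.mp hn
  have hm2 : 2 ∣ m := even_iff_two_dvd.mp hm
  have hn1 : 1 < n := by omega
  set A : Rep ℤ (DihedralGroup n) := Rep.trivial ℤ (DihedralGroup n) (ZMod m) with hA
  have hρ : ∀ (g : DihedralGroup n) (v : ZMod m), A.ρ g v = v := fun g v => rfl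
  -- coercion of a two-cocycle to a raw function
  let tf : cocycles₂ A → (DihedralGroup n × DihedralGroup n → ZMod m) := fun f p => f p
  have htf_add : ∀ f g : cocycles₂ A, tf (f + g) = tf f + tf g := fun f g => rfl
  have hIsC : ∀ f : cocycles₂ A, IsC (tf f) := by
    intro f g h k
    have := (mem_cocycles₂_iff (A := A) f).1 f.2 g h k
    rw [hρ] at this
    exact this
  let c2 : ZMod m →+* ZMod 2 := ZMod.castHom hm2 (ZMod 2)
  -- the invariants homomorphism
  let Φ : cocycles₂ A →+ (ZMod 2 × ZMod 2 × ZMod 2) :=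
    AddMonoidHom.mk' (fun f =>
      (c2 (be (tf f)), c2 (ga (tf f)), if de (tf f) = 0 then 0 else 1)) (by
      intro f g
      have h1 : de (tf f) + de (tf f) = 0 := two_de hn2 (hIsC f)
      have h2 : de (tf g) + de (tf g) = 0 := two_de hn2 (hIsC g)
      have hde : de (tf (f + g)) = de (tf f) + de (tf g) := by
        rw [htf_add, de_add]
      have hbe : be (tf (f + g)) = be (tf f) + be (tf g) := by
        rw [htf_add, be_add]
      have hga : ga (tf (f + g)) = ga (tf f) + ga (tf g) := by
        rw [htf_add, ga_add]
      refine Prod.ext ?_ (Prod.ext ?_ ?_)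
      · show c2 (be (tf (f+g))) = c2 (be (tf f)) + c2 (be (tf g))
        rw [hbe, map_add]
      · show c2 (ga (tf (f+g))) = c2 (ga (tf f)) + c2 (ga (tf g))
        rw [hga, map_add]
      show (if de (tf (f+g)) = 0 then (0 : ZMod 2) else 1)
          = (if de (tf f) = 0 then (0 : ZMod 2) else 1) + (if de (tf g) = 0 then (0:ZMod 2) else 1)
      rcases order2 hm2 _ h1 with ha | ha <;> rcases order2 hm2 _ h2 with hb | hb
      · rw [hde, ha, hb]; simp
      · rw [hde, ha, hb]
        simp [mhalf_ne hm2]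
      · rw [hde, ha, hb]
        simp [mhalf_ne hm2]
      · rw [hde, ha, hb]
        have hsum : ((m/2 : ℕ) : ZMod m) + ((m/2 : ℕ) : ZMod m) = 0 := by
          rw [← Nat.cast_add, show m/2 + m/2 = m from by omega, ZMod.natCast_self]
        rw [hsum]
        simp only [if_pos rfl, if_neg (mhalf_ne hm2)]
        decide)
  let L := addHomLE (im := inferInstance) (inn := inferInstance) Φ
  have hL : ∀ f, L f = Φ f := fun f => rfl
  -- kernel equals coboundaries
  have hcob : ∀ f : cocycles₂ A, (⇑f ∈ coboundaries₂ A) ↔ ∃ x : DihedralGroup n → ZMod m,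
      ∀ g h, A.ρ g (x h) - x (g*h) + x g = f (g, h) := by
    intro f
    simp only [coboundaries₂, LinearMap.mem_range, funext_iff, d₁₂_hom_apply, Prod.forall]
    exact Iff.rfl
  have hker : LinearMap.ker L = LinearMap.ker (H2π A).hom := by
    ext f
    rw [LinearMap.mem_ker, LinearMap.mem_ker]
    change _ ↔ H2π A f = 0
    rw [H2π_eq_zero_iff]
    constructor
    · intro h0
      rw [hL] at h0
      have hbe0 : c2 (be (tf f)) = 0 := congrArg Prod.fst h0
      have hga0 : c2 (ga (tf f)) = 0 := congrArg (fun p => p.2.1) h0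
      have hde0 : de (tf f) = 0 := by
        by_contra hne
        have h22 : (if de (tf f) = 0 then (0 : ZMod 2) else 1) = 0 :=
          congrArg (fun p => p.2.2) h0
        rw [if_neg hne] at h22
        exact one_ne_zero h22
      set F := tf f with hF
      set f11 := F (1, 1) with hf11
      obtain ⟨b0, hb0⟩ := even_split hm2 _ hbe0
      obtain ⟨c0, hc0⟩ := even_split hm2 _ hga0
      have hb' : be (nrm F) = (b0 - f11) + (b0 - f11) := by
        rw [be_nrm, hb0]; ring
      have hc' : ga (nrm F) = (c0 - f11 - f11) + (c0 - f11 - f11) := by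
        rw [ga_nrm, hc0]; ring
      have hd' : de (nrm F) = 0 := by rw [de_nrm hn2, hde0]
      obtain ⟨φ, hφ⟩ := kernel_cob hn2 hn1 (IsC_nrm (hIsC f)) (nrm_one F)
        (b0 - f11) (c0 - f11 - f11) hb' hc' hd'
      rw [hcob]
      refine ⟨fun g => φ g + f11, ?_⟩
      intro g h
      rw [hρ]
      have := hφ g h
      simp only [nrm] at this
      show (φ h + f11) - (φ (g*h) + f11) + (φ g + f11) = F (g, h)
      linear_combination -this
    · intro hmem
      rw [hcob] at hmem
      obtain ⟨x, hx⟩ := hmem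
      have hFx : tf f = db x := by
        funext p
        have := hx p.1 p.2
        rw [hρ] at this
        exact this.symm
      rw [hL]
      have hchar : ∀ a : ZMod 2, a + a = 0 := by decide
      have e1 : c2 (be (tf f)) = 0 := by
        rw [hFx, be_db, map_add]
        exact hchar _
      have e2 : c2 (ga (tf f)) = 0 := by
        rw [hFx, ga_db, map_add]
        exact hchar _
      have e3 : de (tf f) = 0 := by rw [hFx, de_db hn2]
      show (c2 (be (tf f)), c2 (ga (tf f)), if de (tf f) = 0 then 0 else 1)
          = ((0 : ZMod 2), (0 : ZMod 2), (0 : ZMod 2))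
      rw [e1, e2, e3, if_pos rfl]
  -- surjectivity
  have hmemG1 : gen1 ∈ cocycles₂ A := by
    rw [mem_cocycles₂_iff]
    intro g h j
    rw [hρ]
    exact IsC_gen1 g h j
  have hmemG2 : gen2 ∈ cocycles₂ A := by
    rw [mem_cocycles₂_iff]
    intro g h j
    rw [hρ]
    exact IsC_gen2 hn2 g h j
  have hmemG3 : gen3 ∈ cocycles₂ A := by
    rw [mem_cocycles₂_iff]
    intro g h j
    rw [hρ]
    exact IsC_gen3 hm2 g h j
  set G1 : cocycles₂ A := ⟨gen1, hmemG1⟩ with hG1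
  set G2 : cocycles₂ A := ⟨gen2, hmemG2⟩ with hG2
  set G3 : cocycles₂ A := ⟨gen3, hmemG3⟩ with hG3
  have hLG1 : L G1 = (1, 1, 0) := by
    rw [hL]
    show (c2 (be gen1), c2 (ga gen1), if de (gen1 (n := n) (m := m)) = 0 then 0 else 1) = _
    rw [be_gen1, ga_gen1, de_gen1, if_pos rfl, map_one]
  have hLG2 : L G2 = (0, 1, 0) := by
    rw [hL]
    show (c2 (be gen2), c2 (ga gen2), if de (gen2 (n := n) (m := m)) = 0 then 0 else 1) = _
    rw [be_gen2, ga_gen2 hn1, de_gen2 hn2 hn1, if_pos rfl, map_one, map_zero]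
  have hLG3 : L G3 = (0, 0, 1) := by
    rw [hL]
    show (c2 (be gen3), c2 (ga gen3), if de (gen3 (n := n) (m := m)) = 0 then 0 else 1) = _
    rw [be_gen3, ga_gen3 hn1, de_gen3 hn1, if_neg (mhalf_ne hm2), map_zero]
  have hvcast2 : ∀ a : ZMod 2, ((a.val : ℕ) : ZMod 2) = a := fun a => vcast a
  have hsurj : Function.Surjective L := by
    rintro ⟨x, y, z⟩
    refine ⟨x.val • G1 + ((x + y).val • G2 + z.val • G3), ?_⟩
    rw [map_add, map_add, map_nsmul, map_nsmul, map_nsmul, hLG1, hLG2, hLG3]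
    have hchar : ∀ a : ZMod 2, a + a = 0 := by decide
    refine Prod.ext ?_ (Prod.ext ?_ ?_)
    · show x.val • (1 : ZMod 2) + ((x+y).val • (0 : ZMod 2) + z.val • (0 : ZMod 2)) = x
      rw [smul_zero, smul_zero, nsmul_eq_mul, mul_one, hvcast2]
      ring
    · show x.val • (1 : ZMod 2) + ((x+y).val • (1 : ZMod 2) + z.val • (0 : ZMod 2)) = y
      rw [smul_zero, nsmul_eq_mul, nsmul_eq_mul, mul_one, mul_one, hvcast2, hvcast2]
      linear_combination hchar x
    · show x.val • (0 : ZMod 2) + ((x+y).val • (0 : ZMod 2) + z.val • (1 : ZMod 2)) = z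
      rw [smul_zero, smul_zero, nsmul_eq_mul, mul_one, hvcast2]
      ring
  -- assemble
  have hsH : Function.Surjective (H2π A).hom := (ModuleCat.epi_iff_surjective _).1 inferInstance
  exact ⟨((H2π A).hom.quotKerEquivOfSurjective hsH).symm.trans
    ((Submodule.quotEquivOfEq _ _ hker.symm).trans (L.quotKerEquivOfSurjective hsurj))⟩
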